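/- Let t ≥ 2 and let F be a connected t-uniform hypergraph with at least two edges and no isolated vertices such that ρ(F) ≤ 1/(t−1). Then there exists a t-uniform hypergraph H such that F is isomorphic to the (t−1)-blown-up hypergraph H^{(t−1)}. -/

import Mathlib

open Finset

theorem choose_pred (t : ℕ) (ht : 1 ≤ t) : Nat.choose t (t-1) = t := by
  have := Nat.choose_symm (show t - 1 ≤ t by omega)
  rw [show t - (t-1) = 1 by omega] at this
  rw [← this, Nat.choose_one_right]

theorem pc_image {β γ : Type*} [DecidableEq β] [DecidableEq γ] (f : β → γ) (s : Finset β)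
    (hf : Set.InjOn f ↑s) (k : ℕ) :
    (s.image f).powersetCard k = (s.powersetCard k).image (fun u => u.image f) := by
  ext v
  simp only [Finset.mem_powersetCard, Finset.mem_image]
  constructor
  · rintro ⟨hsub, hcard⟩
    have himg : (s.filter (fun a => f a ∈ v)).image f = v := by
      apply Finset.Subset.antisymm
      · intro x hx
        simp only [Finset.mem_image, Finset.mem_filter] at hx
        obtain ⟨a, ⟨_, h⟩, rfl⟩ := hx; exact h
      · intro x hx
        have := hsub hx
        simp only [Finset.mem_image] at this ⊢
        obtain ⟨a, ha, rfl⟩ := this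
        exact ⟨a, Finset.mem_filter.2 ⟨ha, hx⟩, rfl⟩
    refine ⟨s.filter (fun a => f a ∈ v), ⟨Finset.filter_subset _ _, ?_⟩, himg⟩
    have hc2 : ((s.filter (fun a => f a ∈ v)).image f).card = (s.filter (fun a => f a ∈ v)).card :=
      Finset.card_image_of_injOn (hf.mono (Finset.coe_subset.2 (Finset.filter_subset _ s)))
    rw [himg] at hc2
    rw [← hc2, hcard]
  · rintro ⟨u, ⟨husub, hucard⟩, rfl⟩
    refine ⟨Finset.image_subset_image husub, ?_⟩
    rw [Finset.card_image_of_injOn (hf.mono (Finset.coe_subset.2 husub)), hucard]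

theorem card_eq_equiv {β γ : Type*} (s : Finset β) (T : Finset γ) (e : ↥s ≃ ↥T) : s.card = T.card := by
  simpa using Fintype.card_congr e

theorem image_equiv {β γ : Type*} [DecidableEq β] [DecidableEq γ] (s : Finset β) (T : Finset γ)
    (eqv : ↥s ≃ ↥T) (g : β → γ) (hg : ∀ a (h : a ∈ s), g a = (eqv ⟨a, h⟩ : γ)) :
    s.image g = T ∧ Set.InjOn g ↑s := by
  have hinj : Set.InjOn g ↑s := by
    intro a ha b hb hab
    rw [Finset.mem_coe] at ha hb
    rw [hg a ha, hg b hb] at hab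
    have := eqv.injective (Subtype.ext hab)
    exact congrArg Subtype.val this
  constructor
  · apply Finset.eq_of_subset_of_card_le
    · intro x hx
      simp only [Finset.mem_image] at hx
      obtain ⟨a, ha, rfl⟩ := hx
      rw [hg a ha]
      exact (eqv ⟨a, ha⟩).2
    · rw [Finset.card_image_of_injOn hinj]
      exact le_of_eq (card_eq_equiv s T eqv).symm
  · exact hinj

def UU {α : Type*} [DecidableEq α] (L : List (Finset α)) : Finset α := L.foldr (· ∪ ·) ∅

theorem mem_UU {α : Type*} [DecidableEq α] {L : List (Finset α)} {e : Finset α} {a : α}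
    (he : e ∈ L) (ha : a ∈ e) : a ∈ UU L := by
  induction L with
  | nil => exact absurd he List.not_mem_nil
  | cons g M ihM =>
    rcases List.mem_cons.1 he with h | h
    · exact Finset.mem_union_left _ (h ▸ ha)
    · exact Finset.mem_union_right _ (ihM h)

def good {α : Type*} [DecidableEq α] : List (Finset α) → Prop
  | [] => True
  | f :: L => (L = [] ∨ (f ∩ UU L).card = 1) ∧ good L

theorem build {α : Type*} [DecidableEq α] (t : ℕ) (ht : 2 ≤ t) :
    ∀ (L : List (Finset α)), L ≠ [] → (∀ e ∈ L, e.card = t) → good L →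
    ∃ (EH : Finset (Finset ℕ)) (φ : α → Finset ℕ),
      (∀ e ∈ EH, e.card = t) ∧
      Set.InjOn φ ↑(UU L) ∧
      (UU L).image φ = EH.biUnion (fun e => e.powersetCard (t-1)) ∧
      L.toFinset.image (fun e => e.image φ) = EH.image (fun e => e.powersetCard (t-1)) := by
  intro L
  induction L with
  | nil => intro h; exact absurd rfl h
  | cons f L ih =>
    intro _ hunif hgood
    obtain ⟨hcap, hgoodL⟩ := hgood
    have hft : f.card = t := hunif f List.mem_cons_self
    by_cases hL : L = []
    · -- base case : single edge
      subst hL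
      have hU : UU [f] = f := by simp [UU]
      have hcard : f.card = ((Finset.range t).powersetCard (t-1)).card := by
        rw [Finset.card_powersetCard, Finset.card_range, choose_pred t (by omega), hft]
      have eqv := Finset.equivOfCardEq hcard
      classical
      set φ : α → Finset ℕ := fun a => if h : a ∈ f then (eqv ⟨a, h⟩ : Finset ℕ) else ∅ with hφ
      obtain ⟨himg, hinj⟩ := image_equiv f ((Finset.range t).powersetCard (t-1)) eqv φ
        (fun a h => dif_pos h)
      refine ⟨{Finset.range t}, φ, ?_, ?_, ?_, ?_⟩
      · intro e he; rw [Finset.mem_singleton] at he; rw [he, Finset.card_range]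
      · rw [hU]; exact hinj
      · rw [hU, himg, Finset.singleton_biUnion]
      · simp only [List.toFinset_cons, List.toFinset_nil, LawfulSingleton.insert_empty_eq,
          Finset.image_singleton, himg, Finset.image_singleton]
    · -- inductive step
      obtain ⟨EH, φ, hEHunif, hinj, himg, hedges⟩ := ih hL (fun e he => hunif e (List.mem_cons_of_mem f he)) hgoodL
      have hcap1 : (f ∩ UU L).card = 1 := hcap.resolve_left hL
      obtain ⟨x, hx⟩ := Finset.card_eq_one.1 hcap1
      have hxf : x ∈ f := (Finset.mem_inter.1 (hx ▸ Finset.mem_singleton_self x)).1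
      have hxU : x ∈ UU L := (Finset.mem_inter.1 (hx ▸ Finset.mem_singleton_self x)).2
      -- φ x is a (t-1)-subset of some edge e₀ of EH
      have hφx : φ x ∈ EH.biUnion (fun e => e.powersetCard (t-1)) := by
        rw [← himg]; exact Finset.mem_image_of_mem φ hxU
      obtain ⟨e₀, he₀, hφxe₀⟩ := Finset.mem_biUnion.1 hφx
      obtain ⟨hφxsub, hφxcard⟩ := Finset.mem_powersetCard.1 hφxe₀
      set used : Finset ℕ := EH.sup id with hused
      set z : ℕ := used.sup id + 1 with hz
      have hzused : z ∉ used := fun h => by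
        have := Finset.le_sup (f := id) h; simp only [id] at this; omega
      have he₀used : e₀ ⊆ used := Finset.le_sup (f := id) he₀
      have hφxused : φ x ⊆ used := hφxsub.trans he₀used
      have hzφx : z ∉ φ x := fun h => hzused (hφxused h)
      set enew : Finset ℕ := insert z (φ x) with henew
      have henewcard : enew.card = t := by
        rw [henew, Finset.card_insert_of_notMem hzφx, hφxcard]; omega
      have hφxenew : φ x ∈ enew.powersetCard (t-1) :=
        Finset.mem_powersetCard.2 ⟨Finset.subset_insert _ _, hφxcard⟩
      set newvals : Finset (Finset ℕ) := (enew.powersetCard (t-1)).erase (φ x) with hnv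
      have hnvcard : newvals.card = t - 1 := by
        rw [hnv, Finset.card_erase_of_mem hφxenew, Finset.card_powersetCard, henewcard,
          choose_pred t (by omega)]
      have hzin : ∀ v ∈ newvals, z ∈ v := by
        intro v hv
        obtain ⟨hvne, hv⟩ := Finset.mem_erase.1 hv
        obtain ⟨hvsub, hvcard⟩ := Finset.mem_powersetCard.1 hv
        by_contra hzv
        apply hvne
        apply Finset.eq_of_subset_of_card_le
        · intro a ha
          rcases Finset.mem_insert.1 (hvsub ha) with h | h
          · exact absurd (h ▸ ha) hzv
          · exact h
        · rw [hvcard, hφxcard]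
      have hecard : (f.erase x).card = t - 1 := by
        rw [Finset.card_erase_of_mem hxf, hft]
      have eqv := Finset.equivOfCardEq (hecard.trans hnvcard.symm)
      classical
      set φ' : α → Finset ℕ := fun a => if h : a ∈ f.erase x then (eqv ⟨a, h⟩ : Finset ℕ) else φ a with hφ'
      obtain ⟨himg', hinj'⟩ := image_equiv (f.erase x) newvals eqv φ'
        (fun a h => dif_pos h)
      -- φ' agrees with φ on UU L
      have hagree : ∀ a ∈ UU L, φ' a = φ a := by
        intro a ha
        rw [hφ']
        simp only
        rw [dif_neg]
        intro h
        have : a ∈ f ∩ UU L := Finset.mem_inter.2 ⟨Finset.mem_of_mem_erase h, ha⟩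
        rw [hx, Finset.mem_singleton] at this
        exact (Finset.mem_erase.1 h).1 (by rw [this])
      have hφ'x : φ' x = φ x := by
        rw [hφ']; simp only; rw [dif_neg (fun h => (Finset.mem_erase.1 h).1 rfl)]
      -- old values are ⊆ used
      have holdval : ∀ a ∈ UU L, φ a ⊆ used := by
        intro a ha
        have : φ a ∈ EH.biUnion (fun e => e.powersetCard (t-1)) := by
          rw [← himg]; exact Finset.mem_image_of_mem φ ha
        obtain ⟨e₁, he₁, h1⟩ := Finset.mem_biUnion.1 this
        exact (Finset.mem_powersetCard.1 h1).1.trans (Finset.le_sup (f := id) he₁)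
      -- image of f under φ'
      have hfimg : f.image φ' = enew.powersetCard (t-1) := by
        have : f = insert x (f.erase x) := (Finset.insert_erase hxf).symm
        rw [this, Finset.image_insert, hφ'x, himg', hnv, Finset.insert_erase hφxenew]
      have hUcons : UU (f :: L) = f ∪ UU L := rfl
      have himgL : (UU L).image φ' = (UU L).image φ := Finset.image_congr (fun a ha => hagree a ha)
      refine ⟨insert enew EH, φ', ?_, ?_, ?_, ?_⟩
      · intro e he
        rcases Finset.mem_insert.1 he with h | h
        · rw [h]; exact henewcard
        · exact hEHunif e h
      · -- InjOn
        rw [hUcons]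
        intro a ha b hb hab
        rw [Finset.coe_union, Set.mem_union] at ha hb
        have key : ∀ c, c ∈ (↑f : Set α) ∨ c ∈ (↑(UU L) : Set α) → (c ∈ f.erase x) ∨ c ∈ UU L := by
          intro c hc
          rcases hc with h | h
          · rw [Finset.mem_coe] at h
            by_cases hcx : c = x
            · exact Or.inr (hcx ▸ hxU)
            · exact Or.inl (Finset.mem_erase.2 ⟨hcx, h⟩)
          · exact Or.inr (Finset.mem_coe.1 h)
        have hnewz : ∀ c ∈ f.erase x, z ∈ φ' c := by
          intro c hc
          apply hzin
          rw [← himg']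
          exact Finset.mem_image_of_mem φ' hc
        have holdz : ∀ c ∈ UU L, z ∉ φ' c := by
          intro c hc hzc
          rw [hagree c hc] at hzc
          exact hzused (holdval c hc hzc)
        rcases key a ha with ha' | ha' <;> rcases key b hb with hb' | hb'
        · exact hinj' (Finset.mem_coe.2 ha') (Finset.mem_coe.2 hb') hab
        · exact absurd (hab ▸ hnewz a ha') (holdz b hb')
        · exact absurd (hab ▸ hnewz b hb') (holdz a ha')
        · rw [hagree a ha', hagree b hb'] at hab
          exact hinj (Finset.mem_coe.2 ha') (Finset.mem_coe.2 hb') hab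
      · rw [hUcons, Finset.image_union, hfimg, himgL, himg, Finset.biUnion_insert]
      · rw [List.toFinset_cons, Finset.image_insert, hfimg, Finset.image_insert]
        congr 1
        rw [← hedges]
        apply Finset.image_congr
        intro e he
        rw [Finset.mem_coe, List.mem_toFinset] at he
        apply Finset.image_congr
        intro a ha
        exact hagree a (mem_UU he ha)

theorem UU_eq_sup' {α : Type*} [DecidableEq α] (L : List (Finset α)) :
    L.foldr (· ∪ ·) ∅ = L.toFinset.sup id := by
  induction L with
  | nil => simp
  | cons f M ih => simp [ih, Finset.sup_insert]

theorem chain {α : Type*} [DecidableEq α] (t : ℕ) (ht : 2 ≤ t)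
    (F : Finset (Finset α)) (hunif : ∀ e ∈ F, e.card = t) (hF : F.Nonempty)
    (hconn : ∀ A ⊆ F, A.Nonempty → A ≠ F → ¬ Disjoint (A.sup id) ((F \ A).sup id))
    (hs : ∀ F' ⊆ F, F'.Nonempty → t + (t-1)*(F'.card - 1) ≤ (F'.sup id).card)
    (good : List (Finset α) → Prop)
    (hgoodsingle : ∀ f, good [f])
    (hgoodcons : ∀ f L, (f ∩ L.foldr (· ∪ ·) ∅).card = 1 → good L → good (f :: L)) :
    ∃ L : List (Finset α), L ≠ [] ∧ L.toFinset = F ∧ good L := by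
  classical
  have key : ∀ k A, A ⊆ F → (F \ A).card = k → A.Nonempty →
      (∃ L, L ≠ [] ∧ L.toFinset = A ∧ good L) →
      (A.sup id).card = t + (t-1)*(A.card - 1) →
      ∃ L, L ≠ [] ∧ L.toFinset = F ∧ good L := by
    intro k
    induction k with
    | zero =>
      intro A hAF hcard _ hL _
      have : F \ A = ∅ := Finset.card_eq_zero.1 hcard
      have hFA : F ⊆ A := by
        intro e he
        by_contra h
        exact (Finset.eq_empty_iff_forall_notMem.1 this e) (Finset.mem_sdiff.2 ⟨he, h⟩)
      have : A = F := Finset.Subset.antisymm hAF hFA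
      exact this ▸ hL
    | succ k ihk =>
      intro A hAF hcard hAne ⟨L, hLne, hLA, hLgood⟩ hinv
      have hAneF : A ≠ F := by
        intro h
        rw [h, Finset.sdiff_self] at hcard
        simp at hcard
      obtain ⟨x, hx⟩ := Finset.not_disjoint_iff.1 (hconn A hAF hAne hAneF)
      obtain ⟨g, hg, hxg⟩ := Finset.mem_sup.1 hx.2
      have hgF : g ∈ F := (Finset.mem_sdiff.1 hg).1
      have hgA : g ∉ A := (Finset.mem_sdiff.1 hg).2
      have hgt : g.card = t := hunif g hgF
      set A' : Finset (Finset α) := insert g A with hA'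
      have hA'F : A' ⊆ F := Finset.insert_subset hgF hAF
      have hsupA' : A'.sup id = g ∪ A.sup id := by rw [hA', Finset.sup_insert]; rfl
      have hcardA' : A'.card = A.card + 1 := Finset.card_insert_of_notMem hgA
      have hAc : 1 ≤ A.card := Finset.card_pos.2 hAne
      -- card counting
      have hhs := hs A' hA'F (Finset.insert_nonempty g A)
      have huni : (g ∪ A.sup id).card + (g ∩ A.sup id).card = g.card + (A.sup id).card :=
        Finset.card_union_add_card_inter g (A.sup id)
      have hge1 : 1 ≤ (g ∩ A.sup id).card :=
        Finset.card_pos.2 ⟨x, Finset.mem_inter.2 ⟨hxg, hx.1⟩⟩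
      have hw : (t-1) * (A'.card - 1) = (t-1)*(A.card-1) + (t-1) := by
        rw [hcardA']
        have : A.card + 1 - 1 = (A.card - 1) + 1 := by omega
        rw [this, Nat.mul_add, Nat.mul_one]
      have hcap1 : (g ∩ A.sup id).card = 1 := by
        rw [hsupA'] at hhs
        omega
      have hinv' : (A'.sup id).card = t + (t-1)*(A'.card - 1) := by
        rw [hsupA']
        omega
      have hLA' : (g :: L).toFinset = A' := by
        rw [List.toFinset_cons, hLA]
      have hUL : L.foldr (· ∪ ·) ∅ = A.sup id := by rw [UU_eq_sup', hLA]
      have hgood' : good (g :: L) := hgoodcons g L (by rw [hUL]; exact hcap1) hLgood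
      have hcard' : (F \ A').card = k := by
        rw [hA', Finset.sdiff_insert, Finset.card_erase_of_mem hg, hcard]
        omega
      exact ihk A' hA'F hcard' (Finset.insert_nonempty g A) ⟨g :: L, by simp, hLA', hgood'⟩ hinv'
  obtain ⟨f, hf⟩ := hF
  refine key (F \ {f}).card {f} (Finset.singleton_subset_iff.2 hf) rfl
    (Finset.singleton_nonempty f) ⟨[f], by simp, by simp, hgoodsingle f⟩ ?_
  simp [hunif f hf]

/-- Let `t ≥ 2` and let `F` be a connected `t`-uniform hypergraph with at least two
edges (represented by its edge set; its vertices are those covered by its edges, so it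
has no isolated vertices) such that `ρ(F) ≤ 1/(t-1)`, i.e. every subhypergraph `F'`
with at least two edges satisfies `(e'-1)/(v'-t) ≤ 1/(t-1)`. Then `F` is isomorphic to
the `(t-1)`-blown-up hypergraph `H^{(t-1)}` of some `t`-uniform hypergraph `H`. -/
theorem stmt11 (t : ℕ) (ht : 2 ≤ t) (α : Type*) [Fintype α] [DecidableEq α]
    (F : Finset (Finset α)) (hunif : ∀ e ∈ F, e.card = t)
    (hm : 2 ≤ F.card)
    (hconn : ∀ A ⊆ F, A.Nonempty → A ≠ F → ¬ Disjoint (A.sup id) ((F \ A).sup id))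
    (hrho : ∀ F' ⊆ F, 2 ≤ F'.card →
      ((F'.card : ℝ) - 1) / (((F'.sup id).card : ℝ) - (t : ℝ)) ≤ 1 / ((t : ℝ) - 1)) :
    ∃ (n : ℕ) (EH : Finset (Finset (Fin n))),
      (∀ e ∈ EH, e.card = t) ∧
      ∃ φ : α → Finset (Fin n),
        Set.InjOn φ ↑(F.sup id) ∧
        (F.sup id).image φ = EH.biUnion (fun e => e.powersetCard (t - 1)) ∧
        F.image (fun e => e.image φ) = EH.image (fun e => e.powersetCard (t - 1)) := by
  classical
  have hF : F.Nonempty := Finset.card_pos.1 (by omega)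
  -- derive the combinatorial sparsity condition
  have hs : ∀ F' ⊆ F, F'.Nonempty → t + (t-1)*(F'.card - 1) ≤ (F'.sup id).card := by
    intro F' hsub hne
    rcases eq_or_lt_of_le (show 1 ≤ F'.card from Finset.card_pos.2 hne) with h1 | h2
    · -- single edge
      obtain ⟨e, he⟩ := Finset.card_eq_one.1 h1.symm
      rw [he]
      simp [hunif e (hsub (he ▸ Finset.mem_singleton_self e))]
    · have hc2 : 2 ≤ F'.card := h2
      set c := F'.card with hc
      set v := (F'.sup id).card with hv
      obtain ⟨e1, he1, e2, he2, hne12⟩ := Finset.one_lt_card.1 h2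
      have he1t : e1.card = t := hunif e1 (hsub he1)
      have he2t : e2.card = t := hunif e2 (hsub he2)
      have he1sub : e1 ⊆ F'.sup id := Finset.le_sup (f := id) he1
      have he2sub : e2 ⊆ F'.sup id := Finset.le_sup (f := id) he2
      have hvt : t + 1 ≤ v := by
        by_contra h
        push_neg at h
        have hvle : v ≤ t := by omega
        have h1 : e1 = F'.sup id :=
          Finset.eq_of_subset_of_card_le he1sub (by omega)
        have h2' : e2 = F'.sup id :=
          Finset.eq_of_subset_of_card_le he2sub (by omega)
        exact hne12 (h1.trans h2'.symm)
      have hr := hrho F' hsub hc2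
      rw [← hc, ← hv] at hr
      have ht1 : (0:ℝ) < (t:ℝ) - 1 := by
        have : (2:ℝ) ≤ (t:ℝ) := by exact_mod_cast ht
        linarith
      have hvtR : (0:ℝ) < (v:ℝ) - (t:ℝ) := by
        have : (t:ℝ) + 1 ≤ (v:ℝ) := by exact_mod_cast hvt
        linarith
      rw [div_le_div_iff₀ hvtR ht1] at hr
      have hr2 : ((c:ℝ) - 1) * ((t:ℝ) - 1) ≤ (v:ℝ) - (t:ℝ) := by linarith
      have hcast : (((c-1)*(t-1) : ℕ) : ℝ) ≤ (((v - t) : ℕ) : ℝ) := by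
        push_cast [Nat.cast_sub (show 1 ≤ c by omega), Nat.cast_sub (show 1 ≤ t by omega),
          Nat.cast_sub (show t ≤ v by omega)]
        linarith
      have hnat : (c-1)*(t-1) ≤ v - t := by exact_mod_cast hcast
      have : (t-1)*(c-1) = (c-1)*(t-1) := Nat.mul_comm _ _
      omega
  -- obtain a leaf ordering of the edges
  obtain ⟨L, hLne, hLF, hLgood⟩ := chain t ht F hunif hF hconn hs good
    (fun f => ⟨Or.inl rfl, trivial⟩)
    (fun f L h hg => ⟨Or.inr h, hg⟩)
  -- build the hypergraph H over ℕ
  obtain ⟨EH, φ, hEHunif, hinj, himg, hedges⟩ := build t ht L hLne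
    (fun e he => hunif e (hLF ▸ List.mem_toFinset.2 he)) hLgood
  have hUL : UU L = F.sup id := by rw [UU, UU_eq_sup', hLF]
  rw [hUL] at hinj himg
  rw [hLF] at hedges
  -- transport from ℕ to Fin n
  set Vset : Finset ℕ := EH.sup id with hVset
  set n : ℕ := Vset.card with hn
  have hEHne : EH.Nonempty := by
    by_contra h
    rw [Finset.not_nonempty_iff_eq_empty] at h
    rw [h] at hedges
    simp only [Finset.image_empty] at hedges
    exact (hF.image _).ne_empty hedges
  obtain ⟨e₀, he₀⟩ := hEHne
  have hv0 : ∃ v, v ∈ Vset := by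
    have het : e₀.card = t := hEHunif e₀ he₀
    have : e₀.Nonempty := Finset.card_pos.1 (by omega)
    obtain ⟨v, hv⟩ := this
    exact ⟨v, Finset.le_sup (f := id) he₀ hv⟩
  obtain ⟨v0, hv0⟩ := hv0
  set eqv2 := Vset.equivFin with heqv2
  set ψ : ℕ → Fin n := fun a => if h : a ∈ Vset then eqv2 ⟨a, h⟩ else eqv2 ⟨v0, hv0⟩ with hψ
  have hψinj : Set.InjOn ψ ↑Vset := by
    intro a ha b hb hab
    rw [Finset.mem_coe] at ha hb
    rw [hψ] at hab
    simp only [dif_pos ha, dif_pos hb] at hab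
    have := eqv2.injective hab
    exact congrArg Subtype.val this
  have hsubV : ∀ e ∈ EH, e ⊆ Vset := fun e he => Finset.le_sup (f := id) he
  have hvalV : ∀ v ∈ EH.biUnion (fun e => e.powersetCard (t-1)), v ⊆ Vset := by
    intro v hv
    obtain ⟨e, he, hve⟩ := Finset.mem_biUnion.1 hv
    exact (Finset.mem_powersetCard.1 hve).1.trans (hsubV e he)
  refine ⟨n, EH.image (fun e => e.image ψ), ?_, fun a => (φ a).image ψ, ?_, ?_, ?_⟩
  · intro e he
    obtain ⟨e', he', rfl⟩ := Finset.mem_image.1 he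
    rw [Finset.card_image_of_injOn (hψinj.mono (Finset.coe_subset.2 (hsubV e' he')))]
    exact hEHunif e' he'
  · -- injectivity
    intro a ha b hb hab
    have hφa : φ a ⊆ Vset := hvalV _ (himg ▸ Finset.mem_image_of_mem φ (Finset.mem_coe.1 ha))
    have hφb : φ b ⊆ Vset := hvalV _ (himg ▸ Finset.mem_image_of_mem φ (Finset.mem_coe.1 hb))
    have hab' : (φ a).image ψ = (φ b).image ψ := hab
    have : φ a = φ b := by
      ext w
      constructor
      · intro hw
        have : ψ w ∈ (φ b).image ψ := hab' ▸ Finset.mem_image_of_mem ψ hw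
        obtain ⟨w', hw', hww'⟩ := Finset.mem_image.1 this
        rw [← hψinj (Finset.mem_coe.2 (hφb hw')) (Finset.mem_coe.2 (hφa hw)) hww']
        exact hw'
      · intro hw
        have : ψ w ∈ (φ a).image ψ := hab' ▸ Finset.mem_image_of_mem ψ hw
        obtain ⟨w', hw', hww'⟩ := Finset.mem_image.1 this
        rw [← hψinj (Finset.mem_coe.2 (hφa hw')) (Finset.mem_coe.2 (hφb hw)) hww']
        exact hw'
    exact hinj ha hb this
  · -- vertex image equality
    have h1 : (F.sup id).image (fun a => (φ a).image ψ) = ((F.sup id).image φ).image (Finset.image ψ) := by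
      rw [Finset.image_image]
      simp [Function.comp_def]
    rw [h1, himg, Finset.biUnion_image, Finset.image_biUnion]
    apply Finset.biUnion_congr rfl
    intro e he
    exact (pc_image ψ e (hψinj.mono (Finset.coe_subset.2 (hsubV e he))) (t-1)).symm
  · -- edge image equality
    have h1 : F.image (fun e => e.image (fun a => (φ a).image ψ)) =
        (F.image (fun e => e.image φ)).image (Finset.image (Finset.image ψ)) := by
      rw [Finset.image_image]
      apply Finset.image_congr
      intro e _
      simp only [Function.comp]
      rw [Finset.image_image]
      simp [Function.comp_def]
    rw [h1, hedges, Finset.image_image, Finset.image_image]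
    apply Finset.image_congr
    intro e he
    simp only [Function.comp]
    exact (pc_image ψ e (hψinj.mono (Finset.coe_subset.2 (hsubV e (Finset.mem_coe.1 he)))) (t-1)).symm
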